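/- arXiv:1003.0981 — 2 statements merged into one kernel-verified Lean document; each statement's English description precedes it below -/
import Mathlib

section
/- For $0 \le k \le n$, the convolved Fibonacci number satisfies $f^{(k+1)}_{n-k+1} = \sum_{i=0}^{\lfloor (n-k)/2 \rfloor} \binom{n-i}{i} \binom{n-2i}{k}$, where $f^{(k+1)}_{n-k+1} = \sum_{j_1 + \cdots + j_{k+1} = n-k,\ j_t \ge 0} f_{j_1+1} \cdots f_{j_{k+1}+1}$. -/
open PowerSeries Finset

section convolvedFibAux

lemma convFib.sum_antidiagonalTuple_succ {β : Type*} [AddCommMonoid β] (k n : ℕ)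
    (f : (Fin (k+1) → ℕ) → β) :
    ∑ j ∈ Finset.Nat.antidiagonalTuple (k+1) n, f j
      = ∑ p ∈ Finset.HasAntidiagonal.antidiagonal n, ∑ x ∈ Finset.Nat.antidiagonalTuple k p.2,
          f (Fin.cons p.1 x) := by
  rw [show (∑ p ∈ Finset.HasAntidiagonal.antidiagonal n, ∑ x ∈ Finset.Nat.antidiagonalTuple k p.2,
      f (Fin.cons p.1 x))
      = ∑ q ∈ (Finset.HasAntidiagonal.antidiagonal n).sigma (fun p => Finset.Nat.antidiagonalTuple k p.2),
          f (Fin.cons q.1.1 q.2) from (Finset.sum_sigma (Finset.HasAntidiagonal.antidiagonal n) (fun p => Finset.Nat.antidiagonalTuple k p.2) (fun q => f (Fin.cons q.1.1 q.2))).symm]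
  refine Finset.sum_nbij' (fun j => ⟨(j 0, ∑ t, Fin.tail j t), Fin.tail j⟩)
    (fun x => Fin.cons x.1.1 x.2) ?_ ?_ ?_ ?_ ?_
  · intro j hj
    simp only [Finset.Nat.mem_antidiagonalTuple] at hj
    simp only [Finset.mem_sigma, Finset.HasAntidiagonal.mem_antidiagonal,
      Finset.Nat.mem_antidiagonalTuple]
    refine ⟨?_, trivial⟩
    rw [← hj, Fin.sum_univ_succ]
    rfl
  · rintro ⟨⟨a, b⟩, x⟩ hx
    simp only [Finset.mem_sigma, Finset.HasAntidiagonal.mem_antidiagonal,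
      Finset.Nat.mem_antidiagonalTuple] at hx ⊢
    rw [Fin.sum_cons, hx.2, hx.1]
  · intro j hj
    exact Fin.cons_self_tail j
  · rintro ⟨⟨a, b⟩, x⟩ hx
    simp only [Finset.mem_sigma, Finset.HasAntidiagonal.mem_antidiagonal,
      Finset.Nat.mem_antidiagonalTuple] at hx
    refine Sigma.ext ?_ ?_ <;> simp [Fin.tail_cons, hx.2]
  · intro j hj
    simp [Fin.cons_self_tail]

lemma convFib.coeff_pow_mk (g : ℕ → ℤ) (k n : ℕ) :
    PowerSeries.coeff n ((PowerSeries.mk g)^k)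
      = ∑ j ∈ Finset.Nat.antidiagonalTuple k n, ∏ t, g (j t) := by
  induction k generalizing n with
  | zero =>
    cases n <;> simp
  | succ k ih =>
    rw [pow_succ', coeff_mul]
    simp_rw [coeff_mk, ih, convFib.sum_antidiagonalTuple_succ k n (fun j => ∏ t, g (j t)),
      Fin.prod_univ_succ, Fin.cons_zero, Fin.cons_succ, Finset.mul_sum]

lemma convFib.fib_ps_mul :
    (PowerSeries.mk fun j => (Nat.fib (j+1) : ℤ)) * (1 - X - X^2) = 1 := by
  set F : PowerSeries ℤ := PowerSeries.mk fun j => (Nat.fib (j+1) : ℤ) with hF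
  ext n
  rw [mul_sub, mul_sub, mul_one, map_sub, map_sub]
  match n with
  | 0 => simp [hF, PowerSeries.coeff_zero_eq_constantCoeff]
  | 1 =>
    rw [coeff_succ_mul_X]
    simp [hF, pow_two, ← mul_assoc, coeff_succ_mul_X]
  | (m+2) =>
    rw [coeff_succ_mul_X, pow_two, ← mul_assoc, coeff_succ_mul_X, coeff_succ_mul_X]
    simp only [hF, coeff_mk, coeff_one, Nat.add_eq_zero, and_false, if_false,
      Nat.succ_ne_zero]
    have := Nat.fib_add_two (n := m + 1)
    push_cast [this]
    ring

lemma convFib.tele (Y : PowerSeries ℤ) (k M : ℕ) :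
    (∑ m ∈ range (M+1), (Nat.choose (m+k+1) (k+1) : ℤ) * Y^m) * (1 - Y)
      = (∑ m ∈ range (M+1), (Nat.choose (m+k) k : ℤ) * Y^m)
        - (Nat.choose (M+k+1) (k+1) : ℤ) * Y^(M+1) := by
  have key : ∀ m : ℕ,
      (Nat.choose (m+k+1) (k+1) : ℤ) * Y^m * (1 - Y)
        - (Nat.choose (m+k) k : ℤ) * Y^m
      = (Nat.choose (m+k) (k+1) : ℤ) * Y^m
        - (Nat.choose (m+1+k) (k+1) : ℤ) * Y^(m+1) := by
    intro m
    have h1 : (m+k+1).choose (k+1) = (m+k).choose k + (m+k).choose (k+1) :=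
      Nat.choose_succ_succ _ _
    have h2 : m+1+k = m+k+1 := by omega
    rw [h2]
    push_cast [h1]
    ring
  have sumeq :
      (∑ m ∈ range (M+1), (Nat.choose (m+k+1) (k+1) : ℤ) * Y^m) * (1 - Y)
        - (∑ m ∈ range (M+1), (Nat.choose (m+k) k : ℤ) * Y^m)
      = ∑ m ∈ range (M+1),
          ((Nat.choose (m+k) (k+1) : ℤ) * Y^m
            - (Nat.choose (m+1+k) (k+1) : ℤ) * Y^(m+1)) := by
    rw [Finset.sum_mul, ← Finset.sum_sub_distrib]
    exact Finset.sum_congr rfl fun m _ => key m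
  have tsum := Finset.sum_range_sub'
    (f := fun m => (Nat.choose (m+k) (k+1) : ℤ) * Y^m) (n := M+1)
  have h0 : (Nat.choose k (k+1) : ℤ) = 0 := by
    rw [Nat.choose_eq_zero_of_lt (Nat.lt_succ_self k)]; norm_num
  have h0' : ((Nat.choose k (k+1) : ℤ) : PowerSeries ℤ) = 0 := by
    rw [h0]; norm_num
  rw [show M+1+k = M+k+1 from by omega] at tsum
  simp only [Nat.zero_add] at tsum
  linear_combination sumeq + tsum + (Y^0) * h0'

lemma convFib.divlem (M k : ℕ) :
    (X : PowerSeries ℤ)^(M+1) ∣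
      (1 : PowerSeries ℤ) - (∑ m ∈ range (M+1), (Nat.choose (m+k) k : ℤ) * (X + X^2 : PowerSeries ℤ)^m)
            * (1 - (X+X^2))^(k+1) := by
  have hXY : (X : PowerSeries ℤ) ∣ (X + X^2) := ⟨1 + X, by ring⟩
  induction k with
  | zero =>
    have g := geom_sum_mul (X+X^2 : PowerSeries ℤ) (M+1)
    have : (1 : PowerSeries ℤ) - (∑ m ∈ range (M+1), (Nat.choose (m+0) 0 : ℤ) * (X + X^2 : PowerSeries ℤ)^m)
        * (1 - (X+X^2))^(0+1) = (X+X^2)^(M+1) := by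
      simp only [Nat.choose_zero_right, Nat.cast_one, Int.cast_one, one_mul, pow_one]
      linear_combination g
    rw [this]
    exact pow_dvd_pow_of_dvd hXY _
  | succ k ih =>
    have t := convFib.tele (X+X^2 : PowerSeries ℤ) k M
    have step : (1 : PowerSeries ℤ) - (∑ m ∈ range (M+1), ((Nat.choose (m+(k+1)) (k+1) : ℤ) : PowerSeries ℤ) * (X + X^2)^m)
          * (1 - (X+X^2))^(k+1+1)
        = (1 - (∑ m ∈ range (M+1), ((Nat.choose (m+k) k : ℤ) : PowerSeries ℤ) * (X + X^2)^m)
              * (1 - (X+X^2))^(k+1))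
          + ((Nat.choose (M+k+1) (k+1) : ℤ) : PowerSeries ℤ) * (X+X^2)^(M+1) * (1 - (X+X^2))^(k+1) := by
      have hmk : ∀ m : ℕ, m + (k+1) = m + k + 1 := fun m => by omega
      simp only [hmk]
      linear_combination (-(1 - (X+X^2:PowerSeries ℤ))^(k+1)) * t
    rw [step]
    refine dvd_add ih ?_
    exact (((pow_dvd_pow_of_dvd hXY (M+1)).mul_left _).mul_right _)

lemma convFib.choose_swap (M k i : ℕ) (h : 2*i ≤ M) :
    (M-i+k).choose k * (M-i).choose i
      = (M+k-i).choose i * (M+k-2*i).choose k := by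
  have h1 : k + i ≤ M + k - i := by omega
  have e : M - i + k = M + k - i := by omega
  rw [e]
  have A := Nat.choose_mul (n := M+k-i) (k := k+i) (s := k) (Nat.le_add_right _ _)
  have B := Nat.choose_mul (n := M+k-i) (k := k+i) (s := i) (Nat.le_add_left _ _)
  rw [show M+k-i-k = M-i from by omega, show k+i-k = i from by omega] at A
  rw [show M+k-i-i = M+k-2*i from by omega, show k+i-i = k from by omega] at B
  calc (M+k-i).choose k * (M-i).choose i
      = (M+k-i).choose (k+i) * (k+i).choose k := A.symm
    _ = (M+k-i).choose (k+i) * (k+i).choose i := by rw [Nat.choose_symm_add]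
    _ = (M+k-i).choose i * (M+k-2*i).choose k := B

lemma convFib.Estep (M k : ℕ) :
    ∑ m ∈ range (M+1), Nat.choose (m+k) k * Nat.choose m (M-m)
      = ∑ i ∈ range (M/2+1), Nat.choose (M+k-i) i * Nat.choose (M+k-2*i) k := by
  rw [← Finset.sum_range_reflect]
  rw [← Finset.sum_subset (Finset.range_subset_range.mpr (by omega : M/2+1 ≤ M+1))]
  · refine Finset.sum_congr rfl fun i hi => ?_
    rw [Finset.mem_range] at hi
    have h2i : 2*i ≤ M := by omega
    rw [show M+1-1-i = M-i from by omega, show M-(M-i) = i from by omega]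
    exact convFib.choose_swap M k i h2i
  · intro i hi hni
    rw [Finset.mem_range] at hi hni
    rw [show M+1-1-i = M-i from by omega,
      show M-(M-i) = i from by omega,
      Nat.choose_eq_zero_of_lt (by omega : M-i < i), mul_zero]

end convolvedFibAux

/-- Explicit binomial formula for the convolved Fibonacci numbers:
`f^{(k+1)}_{n-k+1} = ∑_{i=0}^{⌊(n-k)/2⌋} C(n-i, i) C(n-2i, k)`. -/
theorem convolved_fib_eq_binomial_sum (n k : ℕ) (hk : k ≤ n) :
    (∑ j ∈ Finset.Nat.antidiagonalTuple (k + 1) (n - k),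
        ∏ t : Fin (k + 1), Nat.fib (j t + 1)) =
      ∑ i ∈ Finset.range ((n - k) / 2 + 1),
        Nat.choose (n - i) i * Nat.choose (n - 2 * i) k := by
  obtain ⟨M, hM⟩ : ∃ M, M = n - k := ⟨_, rfl⟩
  rw [← hM]
  have hn : M + k = n := by omega
  obtain ⟨F, hF⟩ : ∃ F : PowerSeries ℤ, F = PowerSeries.mk (fun j => (Nat.fib (j+1) : ℤ)) :=
    ⟨_, rfl⟩
  obtain ⟨S, hS⟩ : ∃ S : PowerSeries ℤ,
      S = ∑ m ∈ range (M+1), ((Nat.choose (m+k) k : ℤ) : PowerSeries ℤ) * (X + X^2)^m :=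
    ⟨_, rfl⟩
  have hFD : F * (1 - (X+X^2)) = 1 := by
    rw [hF, show ((1 : PowerSeries ℤ) - (X+X^2)) = 1 - X - X^2 from by ring]
    exact convFib.fib_ps_mul
  have hpow : F^(k+1) * (1 - (X+X^2))^(k+1) = 1 := by
    rw [← mul_pow, hFD, one_pow]
  have hdiff : F^(k+1) - S = F^(k+1) * (1 - S * (1 - (X+X^2))^(k+1)) := by
    have : F^(k+1) * (1 - S * (1 - (X+X^2))^(k+1))
        = F^(k+1) - (F^(k+1) * (1 - (X+X^2))^(k+1)) * S := by ring
    rw [this, hpow, one_mul]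
  have hdvd : (X : PowerSeries ℤ)^(M+1) ∣ F^(k+1) - S := by
    rw [hdiff, hS]
    exact Dvd.dvd.mul_left (convFib.divlem M k) _
  have hcoeff : PowerSeries.coeff M (F^(k+1)) = PowerSeries.coeff M S := by
    have h0 := PowerSeries.X_pow_dvd_iff.mp hdvd M (Nat.lt_succ_self M)
    rw [map_sub] at h0
    exact sub_eq_zero.mp h0
  have hL : PowerSeries.coeff M (F^(k+1))
      = ∑ j ∈ Finset.Nat.antidiagonalTuple (k+1) M, ∏ t, (Nat.fib (j t + 1) : ℤ) := by
    rw [hF]; exact convFib.coeff_pow_mk _ _ _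
  have hR : PowerSeries.coeff M S
      = ∑ m ∈ range (M+1), (Nat.choose (m+k) k : ℤ) * (Nat.choose m (M-m) : ℤ) := by
    rw [hS, map_sum]
    refine Finset.sum_congr rfl fun m hm => ?_
    rw [Finset.mem_range] at hm
    have hmM : m ≤ M := Nat.lt_succ_iff.mp hm
    have hC : ((Nat.choose (m+k) k : ℤ) : PowerSeries ℤ)
        = PowerSeries.C (Nat.choose (m+k) k : ℤ) :=
      (map_intCast (PowerSeries.C (R := ℤ)) _).symm
    rw [hC, PowerSeries.coeff_C_mul]
    have hXX : (X + X^2 : PowerSeries ℤ)^m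
        = ((((1 + Polynomial.X)^m : Polynomial ℤ) : PowerSeries ℤ)) * X^m := by
      rw [Polynomial.coe_pow, Polynomial.coe_add, Polynomial.coe_one, Polynomial.coe_X,
        ← mul_pow]
      congr 1
      ring
    rw [hXX, PowerSeries.coeff_mul_X_pow', if_pos hmM,
      Polynomial.coeff_coe, Polynomial.coeff_one_add_X_pow]
  have key : (∑ j ∈ Finset.Nat.antidiagonalTuple (k+1) M, ∏ t, (Nat.fib (j t + 1) : ℤ))
      = ∑ m ∈ range (M+1), (Nat.choose (m+k) k : ℤ) * (Nat.choose m (M-m) : ℤ) := by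
    rw [← hL, ← hR, hcoeff]
  have keyN : (∑ j ∈ Finset.Nat.antidiagonalTuple (k+1) M, ∏ t, Nat.fib (j t + 1))
      = ∑ m ∈ range (M+1), Nat.choose (m+k) k * Nat.choose m (M-m) := by
    have := key
    push_cast at this
    exact_mod_cast this
  rw [keyN, convFib.Estep M k]
  refine Finset.sum_congr rfl fun i hi => ?_
  rw [Finset.mem_range] at hi
  have e1 : M+k-i = n-i := by rw [hn]
  have e2 : M+k-2*i = n-2*i := by rw [hn]
  rw [e1, e2]
end

section
/- Let $G_n$ be the $n \times n$ matrix with $0$ on the diagonal, $1$ above the diagonal, $-1$ on the subdiagonal, and $0$ below the subdiagonal. The determinants satisfy the recurrence $\det G_{n+1} = \det G_0 + \det G_1 + \cdots + \det G_{n-1}$, where $\det G_0 = 1$. -/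
private def Gm (m : ℕ) : Matrix (Fin m) (Fin m) ℤ := fun i j =>
  if (i : ℕ) = (j : ℕ) + 1 then -1
  else if (i : ℕ) < (j : ℕ) then 1 else 0

private lemma succAbove_one_val (n : ℕ) (i : Fin (n + 1)) :
    (((1 : Fin (n + 2)).succAbove i) : ℕ) = if (i : ℕ) = 0 then 0 else (i : ℕ) + 1 := by
  rcases i with ⟨i, hi⟩
  simp only [Fin.succAbove, Fin.lt_def, Fin.castSucc, Fin.castAdd, Fin.castLE, Fin.succ]
  split_ifs <;> simp_all

private lemma key (n : ℕ) : (Gm (n + 2)).det = (Gm (n + 1)).det + (Gm n).det := by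
  rw [Matrix.det_succ_column_zero]
  rw [Finset.sum_eq_single (1 : Fin (n + 2))]
  · have h1 : Gm (n + 2) 1 0 = -1 := by simp [Gm]
    rw [h1]
    have hsub : (Gm (n + 2)).submatrix (Fin.succAbove 1) Fin.succ =
        Matrix.updateRow (Gm (n + 1)) 0 (Gm (n + 1) 0 + Pi.single 0 1) := by
      ext i j
      by_cases hi : i = 0
      · subst hi
        by_cases hj : j = 0
        · subst hj
          simp [Gm, Matrix.submatrix, succAbove_one_val, Pi.single]
        · have hjv : (j : ℕ) ≠ 0 := fun h => hj (Fin.ext h)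
          simp [Gm, Matrix.submatrix, succAbove_one_val, Pi.single_eq_of_ne hj,
            Nat.pos_of_ne_zero hjv]
      · have hiv : (i : ℕ) ≠ 0 := fun h => hi (Fin.ext h)
        rw [Matrix.updateRow_ne hi]
        simp only [Matrix.submatrix_apply, Gm, succAbove_one_val, if_neg hiv, Fin.val_succ]
        split_ifs <;> omega
    rw [hsub, Matrix.det_updateRow_add, Matrix.updateRow_eq_self]
    have h2 : (Matrix.updateRow (Gm (n + 1)) 0 (Pi.single 0 1)).det = (Gm n).det := by
      rw [Matrix.det_succ_row_zero]
      rw [Finset.sum_eq_single (0 : Fin (n + 1))]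
      · have : Matrix.updateRow (Gm (n + 1)) 0 (Pi.single (0 : Fin (n+1)) (1:ℤ)) 0 0 = 1 := by
          simp
        rw [this]
        have hsub2 : (Matrix.updateRow (Gm (n + 1)) 0 (Pi.single 0 1)).submatrix Fin.succ
            (Fin.succAbove 0) = Gm n := by
          ext i j
          rw [Matrix.submatrix_apply, Matrix.updateRow_ne (Fin.succ_ne_zero i)]
          simp [Gm, Fin.succAbove_zero]
        rw [hsub2]
        simp
      · intro j _ hj
        have : Matrix.updateRow (Gm (n + 1)) 0 (Pi.single (0 : Fin (n+1)) (1:ℤ)) 0 j = 0 := by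
          simp [Pi.single_eq_of_ne hj]
        rw [this]; ring
      · simp
    rw [h2]
    simp [Fin.val_one]
  · intro i _ hi
    have hiv : (i : ℕ) ≠ 1 := fun h => hi (Fin.ext (by simpa using h))
    have : Gm (n + 2) i 0 = 0 := by
      simp only [Gm, Fin.val_zero]
      simp [hiv]
    rw [this]; ring
  · simp

/-- For the Hessenberg matrices `G_m` (zero diagonal, `1` above the diagonal,
`-1` on the subdiagonal), `det G_{n+1} = det G_0 + det G_1 + ⋯ + det G_{n-1}`
(with `det G_0 = 1`, the determinant of the empty matrix). -/
theorem det_hessenberg_recurrence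
    (G : (m : ℕ) → Matrix (Fin m) (Fin m) ℤ)
    (hG : ∀ (m : ℕ) (i j : Fin m), G m i j =
      if (i : ℕ) = (j : ℕ) + 1 then -1
      else if (i : ℕ) < (j : ℕ) then 1 else 0)
    (n : ℕ) :
    (G (n + 1)).det = ∑ m ∈ Finset.range n, (G m).det := by
  have hGm : ∀ m, G m = Gm m := by
    intro m; ext i j; rw [hG]; rfl
  simp only [hGm]
  induction n with
  | zero => simp [Matrix.det_fin_one, Gm]
  | succ n ih => rw [Finset.sum_range_succ, ← ih, ← key]
end
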